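/- Let n and ℓ be positive integers with n ≥ 2ℓ, and let G be a triangle-free simple graph on a vertex set V of size n whose matching number ν(G) equals ℓ. Then the number of edges of G satisfies |G| ≤ ℓ(n − ℓ). -/

import Mathlib

open Finset

private lemma sym2_rep {V : Type*} (m : Sym2 V) : ∃ a b, m = s(a,b) := by
  induction m using Sym2.ind with
  | _ x y => exact ⟨x, y, rfl⟩

private lemma no_tri {V : Type*} {G : SimpleGraph V} (htf : G.CliqueFree 3)
    {a b c : V} (hab : G.Adj a b) (hac : G.Adj a c) (hbc : G.Adj b c) : False := by
  classical
  exact htf {a, b, c} (SimpleGraph.is3Clique_triple_iff.2 ⟨hab, hac, hbc⟩)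

/-- `M` is a matching in the simple graph `G`: a finite set of edges of `G`
that are pairwise disjoint (share no vertex). -/
def IsMatchingFinset {V : Type*} (G : SimpleGraph V) (M : Finset (Sym2 V)) : Prop :=
  ↑M ⊆ G.edgeSet ∧ (M : Set (Sym2 V)).Pairwise fun e f => ∀ v : V, v ∈ e → v ∉ f

theorem stmt_0 {V : Type*} [Fintype V] [DecidableEq V]
    (G : SimpleGraph V) [DecidableRel G.Adj]
    (n ℓ : ℕ) (hn : 0 < n) (hℓ : 0 < ℓ) (hn2ℓ : 2 * ℓ ≤ n)
    (hV : Fintype.card V = n)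
    (htf : G.CliqueFree 3)
    (hexists : ∃ M : Finset (Sym2 V), IsMatchingFinset G M ∧ M.card = ℓ)
    (hmax : ∀ M : Finset (Sym2 V), IsMatchingFinset G M → M.card ≤ ℓ) :
    G.edgeFinset.card ≤ ℓ * (n - ℓ) := by
  obtain ⟨M, ⟨hMsub, hMpw⟩, hMcard⟩ := hexists
  set S : Finset V := M.biUnion (fun m => Finset.univ.filter (· ∈ m)) with hSdef
  have hmemS : ∀ v : V, v ∈ S ↔ ∃ m ∈ M, v ∈ m := by
    intro v; simp [hSdef]
  -- each matching edge is an edge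
  have hadj : ∀ m ∈ M, ∀ a b : V, m = s(a,b) → G.Adj a b := by
    intro m hm a b hab
    have h2 := hMsub hm
    rw [hab] at h2
    exact h2
  -- |S| = 2ℓ
  have hScard : S.card = 2 * ℓ := by
    rw [hSdef, Finset.card_biUnion]
    · have : ∀ m ∈ M, (Finset.univ.filter (· ∈ m)).card = 2 := by
        intro m hm
        obtain ⟨a, b, rfl⟩ := sym2_rep m
        have hne : a ≠ b := (hadj _ hm a b rfl).ne
        have h3 : Finset.univ.filter (· ∈ s(a,b)) = {a, b} := by
          ext v; simp [Sym2.mem_iff]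
        rw [h3, Finset.card_insert_of_notMem (by simp [hne]), Finset.card_singleton]
      rw [Finset.sum_congr rfl this, Finset.sum_const, hMcard, smul_eq_mul, mul_comm]
    · intro m hm m' hm' hne
      rw [Function.onFun, Finset.disjoint_left]
      intro v hv hv'
      simp only [Finset.mem_filter] at hv hv'
      exact hMpw hm hm' hne v hv.2 hv'.2
  -- key : any vertex has at most one neighbor on each matching edge
  have key1 : ∀ v : V, ∀ m ∈ M,
      ((Finset.univ.filter (· ∈ m)) ∩ G.neighborFinset v).card ≤ 1 := by
    intro v m hm
    obtain ⟨a, b, rfl⟩ := sym2_rep m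
    have hab : G.Adj a b := hadj _ hm a b rfl
    rw [Finset.card_le_one]
    intro x hx y hy
    simp only [Finset.mem_inter, Finset.mem_filter, SimpleGraph.mem_neighborFinset,
      Sym2.mem_iff] at hx hy
    obtain ⟨⟨-, hx1⟩, hx2⟩ := hx
    obtain ⟨⟨-, hy1⟩, hy2⟩ := hy
    rcases hx1 with rfl | rfl <;> rcases hy1 with rfl | rfl
    · rfl
    · exact (no_tri htf hx2 hy2 hab).elim
    · exact (no_tri htf hy2 hx2 hab).elim
    · rfl
  have key2 : ∀ v : V, (G.neighborFinset v ∩ S).card ≤ ℓ := by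
    intro v
    have hsub : G.neighborFinset v ∩ S ⊆
        M.biUnion (fun m => (Finset.univ.filter (· ∈ m)) ∩ G.neighborFinset v) := by
      intro w hw
      rw [Finset.mem_inter] at hw
      obtain ⟨m, hm, hwm⟩ := (hmemS w).1 hw.2
      exact Finset.mem_biUnion.2 ⟨m, hm, Finset.mem_inter.2 ⟨by simp [hwm], hw.1⟩⟩
    calc (G.neighborFinset v ∩ S).card ≤ _ := Finset.card_le_card hsub
      _ ≤ ∑ m ∈ M, ((Finset.univ.filter (· ∈ m)) ∩ G.neighborFinset v).card :=
        Finset.card_biUnion_le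
      _ ≤ M.card * 1 := Finset.sum_le_card_nsmul _ _ 1 (fun m hm => key1 v m hm)
      _ = ℓ := by rw [hMcard, mul_one]
  -- independence of unmatched vertices
  have indep : ∀ u v : V, u ∉ S → v ∉ S → ¬ G.Adj u v := by
    intro u v hu hv huv
    have hnm : s(u,v) ∉ M := fun h => hu ((hmemS u).2 ⟨_, h, Sym2.mem_mk_left u v⟩)
    have hmatch : IsMatchingFinset G (insert s(u,v) M) := by
      constructor
      · rw [Finset.coe_insert]
        exact Set.insert_subset huv hMsub
      · rw [Finset.coe_insert]
        have hsymm : Symmetric (fun e f : Sym2 V => ∀ w : V, w ∈ e → w ∉ f) := by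
          intro e f h w hwf hwe
          exact h w hwe hwf
        haveI : Std.Symm (fun e f : Sym2 V => ∀ w : V, w ∈ e → w ∉ f) := ⟨fun a b h => hsymm h⟩
        rw [Set.pairwise_insert_of_symm]
        refine ⟨hMpw, fun m hm _ w hw hwm => ?_⟩
        rw [Sym2.mem_iff] at hw
        rcases hw with rfl | rfl
        · exact hu ((hmemS w).2 ⟨m, hm, hwm⟩)
        · exact hv ((hmemS w).2 ⟨m, hm, hwm⟩)
    have := hmax _ hmatch
    rw [Finset.card_insert_of_notMem hnm, hMcard] at this
    omega
  -- the split
  set A : Finset (Sym2 V) := G.edgeFinset.filter (fun e => ∀ v ∈ e, v ∈ S) with hA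
  set B : Finset (Sym2 V) := G.edgeFinset.filter (fun e => ¬ ∀ v ∈ e, v ∈ S) with hB
  have hsplit : A.card + B.card = G.edgeFinset.card :=
    Finset.card_filter_add_card_filter_not _
  -- bound on B
  have hBu : ∀ u ∉ S, (B.filter (fun e => u ∈ e)).card ≤ ℓ := by
    intro u hu
    have hsub : B.filter (fun e => u ∈ e) ⊆
        (G.neighborFinset u ∩ S).image (fun w => s(u, w)) := by
      intro e he
      rw [Finset.mem_filter] at he
      obtain ⟨heB, hue⟩ := he
      have heE : e ∈ G.edgeFinset := (Finset.mem_filter.1 heB).1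
      set w := Sym2.Mem.other' hue with hw
      have hspec : s(u, w) = e := Sym2.other_spec' hue
      have hadj' : G.Adj u w := by
        rw [← hspec] at heE
        exact SimpleGraph.mem_edgeFinset.1 heE
      have hwS : w ∈ S := by
        by_contra hwS
        exact indep u w hu hwS hadj'
      refine Finset.mem_image.2 ⟨w, Finset.mem_inter.2 ⟨?_, hwS⟩, hspec⟩
      rw [SimpleGraph.mem_neighborFinset]; exact hadj'
    calc (B.filter (fun e => u ∈ e)).card ≤ _ := Finset.card_le_card hsub
      _ ≤ (G.neighborFinset u ∩ S).card := Finset.card_image_le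
      _ ≤ ℓ := key2 u
  have hBbound : B.card ≤ (n - 2 * ℓ) * ℓ := by
    have hsub : B ⊆ Sᶜ.biUnion (fun u => B.filter (fun e => u ∈ e)) := by
      intro e he
      have he' := he
      rw [hB, Finset.mem_filter] at he'
      push_neg at he'
      obtain ⟨-, u, hue, huS⟩ := he'
      exact Finset.mem_biUnion.2 ⟨u, Finset.mem_compl.2 huS, Finset.mem_filter.2 ⟨he, hue⟩⟩
    have hc : Sᶜ.card = n - 2 * ℓ := by
      rw [Finset.card_compl, hScard, hV]
    calc B.card ≤ _ := Finset.card_le_card hsub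
      _ ≤ ∑ u ∈ Sᶜ, (B.filter (fun e => u ∈ e)).card := Finset.card_biUnion_le
      _ ≤ Sᶜ.card * ℓ := Finset.sum_le_card_nsmul _ _ ℓ
          (fun u hu => hBu u (Finset.mem_compl.1 hu))
      _ = (n - 2 * ℓ) * ℓ := by rw [hc]
  -- bound on A via induced subgraph
  have hAbound : A.card ≤ ℓ * ℓ := by
    set G' : SimpleGraph (↑S : Set V) := G.induce (↑S : Set V) with hG'
    haveI : DecidableRel G'.Adj := Classical.decRel _
    have hdeg : ∀ v : (↑S : Set V), G'.degree v ≤ ℓ := by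
      intro v
      rw [← SimpleGraph.card_neighborFinset_eq_degree]
      have himg : (G'.neighborFinset v).image Subtype.val ⊆
          G.neighborFinset ↑v ∩ S := by
        intro x hx
        rw [Finset.mem_image] at hx
        obtain ⟨w, hw, rfl⟩ := hx
        rw [SimpleGraph.mem_neighborFinset] at hw
        have hadj2 : G.Adj ↑v ↑w := hw
        refine Finset.mem_inter.2 ⟨?_, w.2⟩
        rw [SimpleGraph.mem_neighborFinset]; exact hadj2
      calc (G'.neighborFinset v).card
          = ((G'.neighborFinset v).image Subtype.val).card :=
            (Finset.card_image_of_injective _ Subtype.val_injective).symm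
        _ ≤ (G.neighborFinset ↑v ∩ S).card := Finset.card_le_card himg
        _ ≤ ℓ := key2 ↑v
    have hcardS : Fintype.card (↑S : Set V) = 2 * ℓ := by
      simp only [Finset.coe_sort_coe, Fintype.card_coe]
      exact hScard
    have hsum := SimpleGraph.sum_degrees_eq_twice_card_edges G'
    have hsum2 : ∑ v : (↑S : Set V), G'.degree v ≤ 2 * ℓ * ℓ := by
      calc ∑ v : (↑S : Set V), G'.degree v ≤ Fintype.card (↑S : Set V) * ℓ :=
            Finset.sum_le_card_nsmul _ _ ℓ (fun v _ => hdeg v)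
        _ = 2 * ℓ * ℓ := by rw [hcardS]
    have hE' : G'.edgeFinset.card ≤ ℓ * ℓ := by
      have h2 : 2 * G'.edgeFinset.card ≤ 2 * (ℓ * ℓ) := by
        rw [← hsum]; calc _ ≤ 2 * ℓ * ℓ := hsum2
          _ = 2 * (ℓ * ℓ) := by ring
      omega
    refine le_trans ?_ hE'
    apply Finset.card_le_card_of_surjOn (Sym2.map (fun x : (↑S : Set V) => (x : V)))
    intro e he
    rw [Finset.mem_coe, hA, Finset.mem_filter] at he
    obtain ⟨heE, hall⟩ := he
    obtain ⟨a, b, rfl⟩ := sym2_rep e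
    have ha : a ∈ S := hall a (Sym2.mem_mk_left a b)
    have hb : b ∈ S := hall b (Sym2.mem_mk_right a b)
    have hadj' : G.Adj a b := SimpleGraph.mem_edgeFinset.1 heE
    refine ⟨s(⟨a, ha⟩, ⟨b, hb⟩), ?_, ?_⟩
    · rw [Finset.mem_coe, SimpleGraph.mem_edgeFinset]
      exact hadj'
    · simp [Sym2.map_pair_eq]
  -- conclusion
  obtain ⟨k, hk⟩ : ∃ k, n = 2 * ℓ + k := ⟨n - 2 * ℓ, by omega⟩
  subst hk
  have h1 : 2 * ℓ + k - 2 * ℓ = k := by omega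
  have h2 : 2 * ℓ + k - ℓ = ℓ + k := by omega
  rw [h1] at hBbound
  rw [h2, Nat.mul_add]
  have := hAbound
  have := hBbound
  rw [mul_comm k ℓ] at hBbound
  omega
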